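/- Let K be a μ-continuous Chomsky algebra, σ : T X → K an interpretation over K, and τ : T X → P(X*) a map that is a homomorphism for the semiring operations on languages with τ(μx.t) = ⋃_{n≥0} τ(nx.t), such that for all x ∈ X and all s, u ∈ T X, σ(s·x·u) = sup_{w ∈ τ(x)} σ(s)·σ̄(w)·σ(u). Then for all s, t, u ∈ T X, the supremum sup_{w ∈ τ(t)} σ(s)·σ̄(w)·σ(u) exists in K and equals σ(s·t·u). -/

import Mathlib

/-- μ-expressions over a set `X` of variables:
`t ::= x | t + t | t·t | 0 | 1 | μx.t`. -/
inductive MuTerm (X : Type) : Type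
  | var : X → MuTerm X
  | zero : MuTerm X
  | one : MuTerm X
  | add : MuTerm X → MuTerm X → MuTerm X
  | mul : MuTerm X → MuTerm X → MuTerm X
  | mu : X → MuTerm X → MuTerm X

namespace MuTerm

variable {X : Type}

/-- Size of a term (used for termination of substitution). -/
def size : MuTerm X → ℕ
  | var _ => 1
  | zero => 1
  | one => 1
  | add s t => size s + size t + 1
  | mul s t => size s + size t + 1
  | mu _ t => size t + 1

variable [DecidableEq X]

/-- Free variables of a μ-expression. -/
def fv : MuTerm X → Finset X
  | var x => {x}
  | zero => ∅
  | one => ∅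
  | add s t => fv s ∪ fv t
  | mul s t => fv s ∪ fv t
  | mu x t => fv t \ {x}

/-- All (free and bound) variables of a μ-expression. -/
def vars : MuTerm X → Finset X
  | var x => {x}
  | zero => ∅
  | one => ∅
  | add s t => vars s ∪ vars t
  | mul s t => vars s ∪ vars t
  | mu x t => insert x (vars t)

/-- Rename free occurrences of the variable `y` to `z`. -/
def rename (y z : X) : MuTerm X → MuTerm X
  | var x => if x = y then var z else var x
  | zero => zero
  | one => one
  | add s t => add (rename y z s) (rename y z t)
  | mul s t => mul (rename y z s) (rename y z t)
  | mu x t => if x = y then mu x t else mu x (rename y z t)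

theorem size_rename (y z : X) : ∀ t : MuTerm X, (rename y z t).size = t.size
  | var x => by simp only [rename]; split <;> rfl
  | zero => rfl
  | one => rfl
  | add s t => by simp [rename, size, size_rename y z s, size_rename y z t]
  | mul s t => by simp [rename, size, size_rename y z s, size_rename y z t]
  | mu x t => by
      simp only [rename]; split
      · rfl
      · simp [size, size_rename y z t]

variable [Infinite X]

/-- Capture-avoiding substitution `t[x := u]`: substitute `u` for the free
occurrences of `x` in the last argument, renaming bound variables to fresh
ones to avoid capture. -/
noncomputable def subst (x : X) (u : MuTerm X) : MuTerm X → MuTerm X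
  | var y => if y = x then u else var y
  | zero => zero
  | one => one
  | add s t => add (subst x u s) (subst x u t)
  | mul s t => mul (subst x u s) (subst x u t)
  | mu y t =>
    if y = x then mu y t
    else
      let z : X := Classical.choose (Infinite.exists_notMem_finset (vars t ∪ fv u ∪ {x}))
      mu z (subst x u (rename y z t))
  termination_by t => size t
  decreasing_by
    all_goals simp only [size, size_rename]
    all_goals omega

/-- The `n`-th approximant `nx.t`: `0x.t = 0`, `(n+1)x.t = t[x := nx.t]`. -/
noncomputable def napprox : ℕ → X → MuTerm X → MuTerm X
  | 0, _, _ => zero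
  | n + 1, x, t => subst x (napprox n x t) t

end MuTerm

/-- Polynomial functions over a semiring `C` in `n` indeterminates: functions
built from constants in `C`, projections, addition, and multiplication. -/
inductive IsPolyFun {C : Type} [Semiring C] : {n : ℕ} → ((Fin n → C) → C) → Prop
  | const {n : ℕ} (c : C) : IsPolyFun fun _ : Fin n → C => c
  | proj {n : ℕ} (i : Fin n) : IsPolyFun fun v => v i
  | add {n : ℕ} {p q : (Fin n → C) → C} :
      IsPolyFun p → IsPolyFun q → IsPolyFun fun v => p v + q v
  | mul {n : ℕ} {p q : (Fin n → C) → C} :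
      IsPolyFun p → IsPolyFun q → IsPolyFun fun v => p v * q v

/-- A Chomsky algebra is an idempotent semiring (ordered by `a ≤ b ↔ a + b = b`)
in which every finite system of polynomial inequalities `pᵢ ≤ xᵢ` has a least
solution. -/
class ChomskyAlgebra (C : Type) extends IdemSemiring C where
  algClosed : ∀ {n : ℕ} (p : Fin n → (Fin n → C) → C), (∀ i, IsPolyFun (p i)) →
    ∃ sol : Fin n → C, (∀ i, p i sol ≤ sol i) ∧
      ∀ τ : Fin n → C, (∀ i, p i τ ≤ τ i) → ∀ i, sol i ≤ τ i

/-- `IsInterp eval` says that `eval` is the family of interpretations of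
μ-expressions over the Chomsky algebra `C`, one for each valuation `v : X → C`:
each `eval v` is a homomorphism with respect to the semiring operations, and
`eval v (μx.t)` is the least `a` with `eval v[x↦a] t ≤ a`. -/
structure IsInterp {X C : Type} [DecidableEq X] [Infinite X] [ChomskyAlgebra C]
    (eval : (X → C) → MuTerm X → C) : Prop where
  var : ∀ (v : X → C) (x : X), eval v (.var x) = v x
  zero : ∀ v, eval v .zero = 0
  one : ∀ v, eval v .one = 1
  add : ∀ v s t, eval v (.add s t) = eval v s + eval v t
  mul : ∀ v s t, eval v (.mul s t) = eval v s * eval v t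
  mu : ∀ (v : X → C) (x : X) (t : MuTerm X),
    IsLeast {a : C | eval (Function.update v x a) t ≤ a} (eval v (.mu x t))

/-- A Chomsky algebra `C` is μ-continuous if for every interpretation `σ` over
`C`, all `c, d ∈ C`, and every term `t`,
`c·σ(μx.t)·d = sup_{n ≥ 0} c·σ(nx.t)·d` (in particular the supremum exists). -/
def MuContinuous (C : Type) [ChomskyAlgebra C] : Prop :=
  ∀ (X : Type) [DecidableEq X] [Infinite X] (eval : (X → C) → MuTerm X → C),
    IsInterp eval → ∀ (v : X → C) (c d : C) (x : X) (t : MuTerm X),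
      IsLUB (Set.range fun n : ℕ => c * eval v (MuTerm.napprox n x t) * d)
        (c * eval v (.mu x t) * d)

/-- A language interpretation `τ : T X → P(Y*)`: a homomorphism for the
semiring operations on languages with `τ(μx.t) = ⋃ n, τ(nx.t)`. -/
structure IsLangInterp {X Y : Type} [DecidableEq X] [Infinite X]
    (τ : MuTerm X → Language Y) : Prop where
  zero : τ .zero = 0
  one : τ .one = 1
  add : ∀ s t, τ (.add s t) = τ s + τ t
  mul : ∀ s t, τ (.mul s t) = τ s * τ t
  mu : ∀ (x : X) (t : MuTerm X), τ (.mu x t) = ⨆ n : ℕ, τ (MuTerm.napprox n x t)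

/-- The canonical interpretation `L_X : T X → P(X*)`: the language
interpretation with `L_X(x) = {x}`. -/
def IsCanonicalInterp {X : Type} [DecidableEq X] [Infinite X]
    (L : MuTerm X → Language X) : Prop :=
  IsLangInterp L ∧ ∀ x : X, L (.var x) = {[x]}

/-- For a word `w = x₁⋯x_k ∈ X*` and `σ : X → K`, `wordProd σ w` is the
product `σ(x₁)⋯σ(x_k)` in `K`, with the empty word mapped to `1`. -/
def wordProd {X K : Type} [Monoid K] (σ : X → K) (w : List X) : K :=
  (w.map σ).prod

/-- `IsLangEval E` says that `E` is the family of structurally induced language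
interpretations, one for each assignment `σ : X → P(Y*)` of languages to
variables: each `E σ` is a homomorphism for the semiring operations on
languages, with `E σ (μx.t) = ⋃ n, E σ (nx.t)`. -/
structure IsLangEval {X Y : Type} [DecidableEq X] [Infinite X]
    (E : (X → Language Y) → MuTerm X → Language Y) : Prop where
  var : ∀ (σ : X → Language Y) (x : X), E σ (.var x) = σ x
  zero : ∀ σ, E σ .zero = 0
  one : ∀ σ, E σ .one = 1
  add : ∀ σ s t, E σ (.add s t) = E σ s + E σ t
  mul : ∀ σ s t, E σ (.mul s t) = E σ s * E σ t
  mu : ∀ (σ : X → Language Y) (x : X) (t : MuTerm X),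
    E σ (.mu x t) = ⨆ n : ℕ, E σ (MuTerm.napprox n x t)

namespace MuTerm

variable {X : Type} [DecidableEq X]

theorem fv_subset_vars : ∀ t : MuTerm X, fv t ⊆ vars t
  | var x => by simp [fv, vars]
  | zero => by simp [fv, vars]
  | one => by simp [fv, vars]
  | add s t => by
      simp only [fv, vars]
      exact Finset.union_subset_union (fv_subset_vars s) (fv_subset_vars t)
  | mul s t => by
      simp only [fv, vars]
      exact Finset.union_subset_union (fv_subset_vars s) (fv_subset_vars t)
  | mu x t => by
      simp only [fv, vars]
      exact (Finset.sdiff_subset).trans ((fv_subset_vars t).trans (Finset.subset_insert _ _))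

/-- Iteration of an ordinal function starting at `0`. -/
def oiter (f : Ordinal → Ordinal) : ℕ → Ordinal
  | 0 => 0
  | n + 1 => f (oiter f n)

/-- An ordinal-valued interpretation of μ-terms, used to show well-foundedness of
approximant unfolding. -/
noncomputable def oval : MuTerm X → (X → Ordinal.{0}) → Ordinal.{0}
  | var x, V => V x
  | zero, _ => 0
  | one, _ => 0
  | add s t, V => oval s V + oval t V + 1
  | mul s t, V => oval s V + oval t V + 1
  | mu x t, V => (⨆ n : ℕ, oiter (fun a => oval t (Function.update V x a)) n) + 1

theorem oval_congr : ∀ (t : MuTerm X) {V V' : X → Ordinal},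
    (∀ y ∈ fv t, V y = V' y) → oval t V = oval t V'
  | var x, V, V', h => h x (by simp [fv])
  | zero, _, _, _ => rfl
  | one, _, _, _ => rfl
  | add s t, V, V', h => by
      simp only [oval]
      rw [oval_congr s fun y hy => h y (by simp [fv, hy]),
        oval_congr t fun y hy => h y (by simp [fv, hy])]
  | mul s t, V, V', h => by
      simp only [oval]
      rw [oval_congr s fun y hy => h y (by simp [fv, hy]),
        oval_congr t fun y hy => h y (by simp [fv, hy])]
  | mu x t, V, V', h => by
      simp only [oval]
      have : (fun a => oval t (Function.update V x a))
          = fun a => oval t (Function.update V' x a) := by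
        funext a
        refine oval_congr t fun y hy => ?_
        by_cases hyx : y = x
        · subst hyx; simp
        · simp only [Function.update_of_ne hyx]
          exact h y (by simp [fv, hy, hyx])
      rw [this]

end MuTerm

namespace MuTerm

variable {X : Type} [DecidableEq X]

theorem oval_rename (y z : X) : ∀ (t : MuTerm X) (V : X → Ordinal), z ∉ vars t →
    oval (rename y z t) V = oval t (Function.update V y (V z))
  | var p, V, hz => by
      simp only [rename]
      split
      · next h => subst h; simp [oval]
      · next h => simp [oval, Function.update_of_ne h]
  | zero, _, _ => rfl
  | one, _, _ => rfl
  | add s t, V, hz => by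
      simp only [vars, Finset.mem_union, not_or] at hz
      simp only [rename, oval, oval_rename y z s V hz.1, oval_rename y z t V hz.2]
  | mul s t, V, hz => by
      simp only [vars, Finset.mem_union, not_or] at hz
      simp only [rename, oval, oval_rename y z s V hz.1, oval_rename y z t V hz.2]
  | mu p b, V, hz => by
      simp only [vars, Finset.mem_insert, not_or] at hz
      obtain ⟨hzp, hzb⟩ := hz
      simp only [rename]
      split
      · next h =>
        simp only [oval]
        have : (fun a => oval b (Function.update V p a))
            = fun a => oval b (Function.update (Function.update V y (V z)) p a) := by
          funext a
          refine oval_congr b fun q hq => ?_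
          by_cases hqp : q = p
          · subst hqp; simp
          · simp [Function.update_of_ne hqp,
              Function.update_of_ne (show q ≠ y by rw [← h]; exact hqp)]
        rw [this]
      · next h =>
        simp only [oval]
        have : (fun a => oval (rename y z b) (Function.update V p a))
            = fun a => oval b (Function.update (Function.update V y (V z)) p a) := by
          funext a
          rw [oval_rename y z b (Function.update V p a) hzb]
          refine oval_congr b fun q hq => ?_
          by_cases hqp : q = p
          · subst hqp
            simp [Function.update_of_ne h, Function.update_of_ne hzp]
          · by_cases hqy : q = y
            · subst hqy
              simp [Function.update_of_ne hqp, Function.update_of_ne hzp]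
            · simp [Function.update_of_ne hqp, Function.update_of_ne hqy]
        rw [this]

end MuTerm

namespace MuTerm

variable {X : Type} [DecidableEq X] [Infinite X]

theorem oval_subst (x : X) (u : MuTerm X) : ∀ (t : MuTerm X) (V : X → Ordinal),
    oval (subst x u t) V = oval t (Function.update V x (oval u V))
  | var y, V => by
      rw [subst]
      split
      · next h => subst h; simp [oval]
      · next h => simp [oval, Function.update_of_ne h]
  | zero, V => by rw [subst]; rfl
  | one, V => by rw [subst]; rfl
  | add s t, V => by
      rw [subst]
      simp only [oval, oval_subst x u s V, oval_subst x u t V]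
  | mul s t, V => by
      rw [subst]
      simp only [oval, oval_subst x u s V, oval_subst x u t V]
  | mu y b, V => by
      rw [subst]
      split
      · next h =>
        subst h
        simp only [oval]
        have : (fun a => oval b (Function.update V y a))
            = fun a => oval b (Function.update (Function.update V y (oval u V)) y a) := by
          funext a
          refine oval_congr b fun q hq => ?_
          by_cases hqy : q = y
          · subst hqy; simp
          · simp [Function.update_of_ne hqy]
        rw [this]
      · next h =>
        set z : X := Classical.choose (Infinite.exists_notMem_finset (vars b ∪ fv u ∪ {x})) with hzdef
        have hz := Classical.choose_spec (Infinite.exists_notMem_finset (vars b ∪ fv u ∪ {x}))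
        rw [← hzdef] at hz
        simp only [Finset.mem_union, Finset.mem_singleton, not_or] at hz
        obtain ⟨⟨hzb, hzu⟩, hzx⟩ := hz
        simp only [oval]
        have : (fun a => oval (subst x u (rename y z b)) (Function.update V z a))
            = fun a => oval b (Function.update (Function.update V x (oval u V)) y a) := by
          funext a
          rw [oval_subst x u (rename y z b) (Function.update V z a)]
          have hu : oval u (Function.update V z a) = oval u V :=
            oval_congr u fun q hq => Function.update_of_ne (fun hh => hzu (by rw [← hh]; exact hq)) _ _
          rw [hu, oval_rename y z b _ hzb]
          have hzval : Function.update (Function.update V z a) x (oval u V) z = a := by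
            simp [Function.update_of_ne hzx]
          rw [hzval]
          refine oval_congr b fun q hq => ?_
          by_cases hqy : q = y
          · subst hqy; simp
          · simp only [Function.update_of_ne hqy]
            by_cases hqx : q = x
            · subst hqx; simp
            · have hqz : q ≠ z := fun hh => hzb (hh ▸ (fv_subset_vars b hq))
              simp [Function.update_of_ne hqx, Function.update_of_ne hqz]
        rw [this]
  termination_by t => t.size
  decreasing_by all_goals simp only [size, size_rename]; all_goals omega

theorem oval_napprox (x : X) (t : MuTerm X) (V : X → Ordinal) :
    ∀ n : ℕ, oval (napprox n x t) V = oiter (fun a => oval t (Function.update V x a)) n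
  | 0 => rfl
  | n + 1 => by
      show oval (subst x (napprox n x t) t) V = _
      rw [oval_subst, oval_napprox x t V n]
      rfl

theorem oval_napprox_lt (x : X) (t : MuTerm X) (V : X → Ordinal) (n : ℕ) :
    oval (napprox n x t) V < oval (mu x t) V := by
  rw [oval_napprox x t V n]
  show _ < oval (mu x t) V
  simp only [oval]
  refine lt_of_le_of_lt (le_ciSup (Ordinal.bddAbove_range _) n) ?_
  rw [Ordinal.add_one_eq_succ]
  exact Order.lt_succ _

/-- Well-founded "goodness" of μ-terms: closed under the constructors with the μ-case
reduced to all approximants. -/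
inductive Dgood : MuTerm X → Prop
  | var (x : X) : Dgood (var x)
  | zero : Dgood zero
  | one : Dgood one
  | add {s t : MuTerm X} : Dgood s → Dgood t → Dgood (add s t)
  | mul {s t : MuTerm X} : Dgood s → Dgood t → Dgood (mul s t)
  | mu (x : X) (t : MuTerm X) : (∀ n : ℕ, Dgood (napprox n x t)) → Dgood (mu x t)

theorem dgood_all (t : MuTerm X) : Dgood t := by
  have H : ∀ i : Ordinal, ∀ t : MuTerm X, oval t (fun _ => 0) = i → Dgood t := by
    intro i
    induction i using Ordinal.induction with
    | h i IH =>
      intro t ht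
      subst ht
      have hlt1 : ∀ a b : Ordinal, a < a + b + 1 := fun a b => by
        refine lt_of_le_of_lt (le_self_add (a := a) (b := b)) ?_
        rw [Ordinal.add_one_eq_succ]; exact Order.lt_succ _
      have hlt2 : ∀ a b : Ordinal, b < a + b + 1 := fun a b => by
        refine lt_of_le_of_lt (le_add_self (a := b) (b := a)) ?_
        rw [Ordinal.add_one_eq_succ]; exact Order.lt_succ _
      cases t with
      | var x => exact .var x
      | zero => exact .zero
      | one => exact .one
      | add s t => exact .add (IH _ (hlt1 _ _) s rfl) (IH _ (hlt2 _ _) t rfl)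
      | mul s t => exact .mul (IH _ (hlt1 _ _) s rfl) (IH _ (hlt2 _ _) t rfl)
      | mu x b => exact .mu x b fun n => IH _ (oval_napprox_lt x b _ n) _ rfl
  exact H _ t rfl

end MuTerm

/-- Combine indexed least upper bounds: a LUB of LUBs is the LUB of the union. -/
theorem isLUB_iUnion_of {K : Type} [Preorder K] {ι : Sort _} {S : ι → Set K} {b : ι → K}
    {a : K} (h : ∀ i, IsLUB (S i) (b i)) (ha : IsLUB (Set.range b) a) :
    IsLUB (⋃ i, S i) a := by
  constructor
  · rintro y hy
    rcases Set.mem_iUnion.1 hy with ⟨i, hi⟩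
    exact le_trans ((h i).1 hi) (ha.1 ⟨i, rfl⟩)
  · intro c hc
    refine ha.2 ?_
    rintro _ ⟨i, rfl⟩
    exact (h i).2 fun y hy => hc (Set.mem_iUnion.2 ⟨i, hy⟩)

/-- The word `x₁⋯x_k` as the μ-term `x₁·(x₂·(⋯·1))`. -/
def MuTerm.ofWord {X : Type} : List X → MuTerm X
  | [] => .one
  | x :: w => .mul (.var x) (MuTerm.ofWord w)

theorem wordProd_nil {X K : Type} [Monoid K] (σ : X → K) : wordProd σ [] = 1 := rfl

theorem wordProd_cons {X K : Type} [Monoid K] (σ : X → K) (x : X) (w : List X) :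
    wordProd σ (x :: w) = σ x * wordProd σ w := by simp [wordProd]

theorem wordProd_append {X K : Type} [Monoid K] (σ : X → K) (w₁ w₂ : List X) :
    wordProd σ (w₁ ++ w₂) = wordProd σ w₁ * wordProd σ w₂ := by simp [wordProd]

/-- if `σ(s·x·u) = sup_{w ∈ τ(x)} σ(s)·σ̄(w)·σ(u)` for all
variables `x`, then `σ(s·t·u) = sup_{w ∈ τ(t)} σ(s)·σ̄(w)·σ(u)` for all terms
`t` (in particular the supremum exists). -/
theorem statement6 {X K : Type} [DecidableEq X] [Infinite X] [ChomskyAlgebra K]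
    (hK : MuContinuous K) (eval : (X → K) → MuTerm X → K) (hσ : IsInterp eval)
    (v : X → K) (τ : MuTerm X → Language X) (hτ : IsLangInterp τ)
    (hbase : ∀ (x : X) (s u : MuTerm X),
      IsLUB {y : K | ∃ w ∈ τ (.var x), y = eval v s * wordProd v w * eval v u}
        (eval v (.mul (.mul s (.var x)) u)))
    (s t u : MuTerm X) :
    IsLUB {y : K | ∃ w ∈ τ t, y = eval v s * wordProd v w * eval v u}
      (eval v (.mul (.mul s t) u)) := by
  have evword : ∀ w : List X, eval v (MuTerm.ofWord w) = wordProd v w := by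
    intro w
    induction w with
    | nil => rw [MuTerm.ofWord, hσ.one, wordProd_nil]
    | cons x w ih => rw [MuTerm.ofWord, hσ.mul, hσ.var, ih, wordProd_cons]
  have main : ∀ t : MuTerm X, t.Dgood → ∀ s u : MuTerm X,
      IsLUB {y : K | ∃ w ∈ τ t, y = eval v s * wordProd v w * eval v u}
        (eval v s * eval v t * eval v u) := by
    intro t hD
    induction hD with
    | var x =>
      intro s u
      have h := hbase x s u
      rwa [hσ.mul, hσ.mul] at h
    | zero =>
      intro s u
      rw [hσ.zero, mul_zero, zero_mul]
      have hset : {y : K | ∃ w ∈ τ MuTerm.zero, y = eval v s * wordProd v w * eval v u}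
          = (∅ : Set K) := by
        rw [hτ.zero]; ext y; simp
      rw [hset, ← bot_eq_zero]
      exact isLUB_empty
    | one =>
      intro s u
      rw [hσ.one, mul_one]
      have hset : {y : K | ∃ w ∈ τ MuTerm.one, y = eval v s * wordProd v w * eval v u}
          = {eval v s * eval v u} := by
        rw [hτ.one]; ext y
        simp [Language.mem_one, wordProd_nil]
      rw [hset]
      exact isLUB_singleton
    | @add a b _ _ iha ihb =>
      intro s u
      rw [hσ.add, mul_add, add_mul, add_eq_sup]
      have hset : {y : K | ∃ w ∈ τ (MuTerm.add a b), y = eval v s * wordProd v w * eval v u}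
          = {y : K | ∃ w ∈ τ a, y = eval v s * wordProd v w * eval v u}
            ∪ {y : K | ∃ w ∈ τ b, y = eval v s * wordProd v w * eval v u} := by
        ext y
        simp only [Set.mem_setOf_eq, Set.mem_union, hτ.add, Language.mem_add]
        constructor
        · rintro ⟨w, hw | hw, rfl⟩
          · exact Or.inl ⟨w, hw, rfl⟩
          · exact Or.inr ⟨w, hw, rfl⟩
        · rintro (⟨w, hw, rfl⟩ | ⟨w, hw, rfl⟩)
          · exact ⟨w, Or.inl hw, rfl⟩
          · exact ⟨w, Or.inr hw, rfl⟩
      rw [hset]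
      exact (iha s u).union (ihb s u)
    | @mul a b _ _ iha ihb =>
      intro s u
      have key : IsLUB
          (⋃ j : {w : List X // w ∈ τ b},
            {y : K | ∃ w₁ ∈ τ a, y = eval v s * wordProd v w₁ * (wordProd v j.1 * eval v u)})
          (eval v s * eval v a * eval v b * eval v u) := by
        refine isLUB_iUnion_of
          (b := fun j : {w : List X // w ∈ τ b} =>
            eval v s * eval v a * (wordProd v j.1 * eval v u)) ?_ ?_
        · intro j
          have h := iha s (MuTerm.mul (MuTerm.ofWord j.1) u)
          rwa [hσ.mul, evword] at h
        · have h := ihb (MuTerm.mul s a) u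
          rw [hσ.mul] at h
          have hr : Set.range (fun j : {w : List X // w ∈ τ b} =>
              eval v s * eval v a * (wordProd v j.1 * eval v u))
              = {y : K | ∃ w₂ ∈ τ b, y = eval v s * eval v a * wordProd v w₂ * eval v u} := by
            ext y
            constructor
            · rintro ⟨⟨w, hw⟩, rfl⟩
              exact ⟨w, hw, by rw [mul_assoc (eval v s * eval v a)]⟩
            · rintro ⟨w, hw, rfl⟩
              exact ⟨⟨w, hw⟩, by rw [mul_assoc (eval v s * eval v a)]⟩
          rw [hr]
          exact h
      rw [hσ.mul, ← mul_assoc]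
      have hset : {y : K | ∃ w ∈ τ (MuTerm.mul a b), y = eval v s * wordProd v w * eval v u}
          = ⋃ j : {w : List X // w ∈ τ b},
            {y : K | ∃ w₁ ∈ τ a, y = eval v s * wordProd v w₁ * (wordProd v j.1 * eval v u)} := by
        ext y
        simp only [Set.mem_setOf_eq, Set.mem_iUnion, hτ.mul, Language.mem_mul]
        constructor
        · rintro ⟨w, ⟨w₁, hw₁, w₂, hw₂, rfl⟩, rfl⟩
          exact ⟨⟨w₂, hw₂⟩, w₁, hw₁, by rw [wordProd_append, ← mul_assoc, ← mul_assoc]⟩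
        · rintro ⟨⟨w₂, hw₂⟩, w₁, hw₁, rfl⟩
          exact ⟨w₁ ++ w₂, ⟨w₁, hw₁, w₂, hw₂, rfl⟩,
            by rw [wordProd_append, ← mul_assoc, ← mul_assoc]⟩
      rw [hset]
      exact key
    | mu x b hb ih =>
      intro s u
      have hK' := hK X eval hσ v (eval v s) (eval v u) x b
      have key := isLUB_iUnion_of
        (S := fun n : ℕ =>
          {y : K | ∃ w ∈ τ (MuTerm.napprox n x b), y = eval v s * wordProd v w * eval v u})
        (fun n => ih n s u) hK'
      have hset : {y : K | ∃ w ∈ τ (MuTerm.mu x b), y = eval v s * wordProd v w * eval v u}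
          = ⋃ n : ℕ,
            {y : K | ∃ w ∈ τ (MuTerm.napprox n x b), y = eval v s * wordProd v w * eval v u} := by
        ext y
        simp only [Set.mem_setOf_eq, Set.mem_iUnion, hτ.mu, Language.mem_iSup]
        constructor
        · rintro ⟨w, ⟨n, hw⟩, rfl⟩
          exact ⟨n, w, hw, rfl⟩
        · rintro ⟨n, w, hw, rfl⟩
          exact ⟨w, ⟨n, hw⟩, rfl⟩
      rw [hset]
      exact key
  have h := main t (MuTerm.dgood_all t) s u
  rwa [hσ.mul, hσ.mul]
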